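/- arXiv:1911.10465 — 2 statements merged into one kernel-verified Lean document; each statement's English description precedes it below -/
import Mathlib

section
/- Let k ≥ 1, η > 0, and let f be a C^k function on an interval I with |f^{(k)}| > η on I. Then there is a constant C depending only on k such that the Lebesgue measure of {x ∈ I : |f(x)| ≤ λ} is at most C (λ/η)^{1/k} for every λ > 0. -/
open MeasureTheory Set

/-- Diameter bound for the sublevel set of a function with derivative `> η`. -/
lemma sublevel_diam {x₀ x₁ η δ : ℝ} {g : ℝ → ℝ} (hη : 0 < η)
    (hc : ContinuousOn g (Icc x₀ x₁))
    (hdiff : DifferentiableOn ℝ g (interior (Icc x₀ x₁)))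
    (hder : ∀ x ∈ interior (Icc x₀ x₁), η < deriv g x) :
    volume {x ∈ Icc x₀ x₁ | |g x| ≤ δ} ≤ ENNReal.ofReal (4 * (δ / η)) := by
  by_cases hne : {x ∈ Icc x₀ x₁ | |g x| ≤ δ}.Nonempty
  · obtain ⟨z, hzI, hzδ⟩ := hne
    have hδ0 : 0 ≤ δ := le_trans (abs_nonneg _) hzδ
    have h2 : 0 ≤ 2 * δ / η := by positivity
    have mvt := (convex_Icc x₀ x₁).mul_sub_lt_image_sub_of_lt_deriv hc hdiff hder
    have hsub : {x ∈ Icc x₀ x₁ | |g x| ≤ δ} ⊆ Icc (z - 2 * δ / η) (z + 2 * δ / η) := by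
      rintro y ⟨hyI, hyδ⟩
      rcases lt_trichotomy y z with h | h | h
      · have hmvt := mvt y hyI z hzI h
        have hzy : z - y ≤ 2 * δ / η := by
          rw [le_div_iff₀ hη]
          nlinarith [abs_le.1 hyδ, abs_le.1 hzδ]
        exact ⟨by linarith, by linarith⟩
      · subst h; exact ⟨by linarith, by linarith⟩
      · have hmvt := mvt z hzI y hyI h
        have hzy : y - z ≤ 2 * δ / η := by
          rw [le_div_iff₀ hη]
          nlinarith [abs_le.1 hyδ, abs_le.1 hzδ]
        exact ⟨by linarith, by linarith⟩
    calc volume {x ∈ Icc x₀ x₁ | |g x| ≤ δ}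
        ≤ volume (Icc (z - 2 * δ / η) (z + 2 * δ / η)) := measure_mono hsub
      _ = ENNReal.ofReal (z + 2 * δ / η - (z - 2 * δ / η)) := Real.volume_Icc
      _ = ENNReal.ofReal (4 * (δ / η)) := by congr 1; ring
  · rw [not_nonempty_iff_eq_empty.mp hne]
    simp

/-- A continuous function with `|h| > η` on an interval has constant sign. -/
lemma sign_const {x₀ x₁ η : ℝ} {h : ℝ → ℝ} (hx : x₀ ≤ x₁) (hη : 0 < η)
    (hc : ContinuousOn h (Icc x₀ x₁)) (habs : ∀ x ∈ Icc x₀ x₁, η < |h x|) :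
    (∀ x ∈ Icc x₀ x₁, η < h x) ∨ (∀ x ∈ Icc x₀ x₁, η < -h x) := by
  have hx₀ : x₀ ∈ Icc x₀ x₁ := ⟨le_refl _, hx⟩
  have key : ∀ h : ℝ → ℝ, ContinuousOn h (Icc x₀ x₁) → (∀ x ∈ Icc x₀ x₁, η < |h x|) →
      η < h x₀ → ∀ x ∈ Icc x₀ x₁, η < h x := by
    intro h hc habs h0 x hxI
    by_contra hcon
    push_neg at hcon
    have hneg : h x < 0 := by
      rcases lt_abs.1 (habs x hxI) with hp | hn
      · linarith
      · linarith
    have husub : uIcc x₀ x ⊆ Icc x₀ x₁ :=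
      (convex_Icc x₀ x₁).ordConnected.uIcc_subset hx₀ hxI
    have hmem : (0:ℝ) ∈ uIcc (h x₀) (h x) := by
      rw [Set.mem_uIcc]
      right
      exact ⟨hneg.le, by linarith⟩
    obtain ⟨c, hcmem, hc0⟩ := intermediate_value_uIcc (hc.mono husub) hmem
    have := habs c (husub hcmem)
    rw [hc0] at this
    simp at this
    linarith
  rcases lt_abs.1 (habs x₀ hx₀) with hp | hn
  · exact Or.inl (key h hc habs hp)
  · exact Or.inr (key (fun x => -h x) hc.neg (fun x hxI => by simpa using habs x hxI) hn)

/-- Iterated derivatives within a smaller set agree with those in the bigger set. -/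
lemma iter_subset {f : ℝ → ℝ} {s t : Set ℝ} (hst : s ⊆ t) (hs : UniqueDiffOn ℝ s)
    (ht : UniqueDiffOn ℝ t) {n : ℕ} (hf : ContDiffOn ℝ n f t) :
    ∀ m : ℕ, m < n → ∀ x ∈ s, iteratedDerivWithin m f s x = iteratedDerivWithin m f t x := by
  intro m
  induction m with
  | zero => intro _ x _; simp
  | succ m IH =>
    intro hmn x hx
    have hm' := Nat.lt_of_succ_lt hmn
    have hdt : DifferentiableWithinAt ℝ (iteratedDerivWithin m f t) t x :=
      (hf.differentiableOn_iteratedDerivWithin (by exact_mod_cast hm') ht) x (hst hx)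
    rw [iteratedDerivWithin_succ, iteratedDerivWithin_succ,
      derivWithin_congr (fun y hy => IH hm' y hy) (IH hm' x hx),
      derivWithin_subset hst (hs x hx) hdt]

/-- Reduction from the absolute-value hypothesis to the positive-sign hypothesis. -/
lemma pos_to_abs (k : ℕ) (C : ℝ)
    (hpos : ∀ (x₀ x₁ : ℝ) (f : ℝ → ℝ) (η : ℝ), x₀ < x₁ → 0 < η →
      ContDiffOn ℝ k f (Icc x₀ x₁) →
      (∀ x ∈ Icc x₀ x₁, η < iteratedDerivWithin k f (Icc x₀ x₁) x) →
      ∀ l : ℝ, 0 < l →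
        volume {x ∈ Icc x₀ x₁ | |f x| ≤ l} ≤ ENNReal.ofReal (C * (l / η) ^ (1 / (k:ℝ)))) :
    ∀ (x₀ x₁ : ℝ) (f : ℝ → ℝ) (η : ℝ), x₀ ≤ x₁ → 0 < η →
      ContDiffOn ℝ k f (Icc x₀ x₁) →
      (∀ x ∈ Icc x₀ x₁, η < |iteratedDerivWithin k f (Icc x₀ x₁) x|) →
      ∀ l : ℝ, 0 < l →
        volume {x ∈ Icc x₀ x₁ | |f x| ≤ l} ≤ ENNReal.ofReal (C * (l / η) ^ (1 / (k:ℝ))) := by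
  intro x₀ x₁ f η hx hη hf habs l hl
  rcases eq_or_lt_of_le hx with heq | hlt
  · subst heq
    have hsub : {x ∈ Icc x₀ x₀ | |f x| ≤ l} ⊆ {x₀} := by
      rintro y ⟨hyI, -⟩
      simpa using hyI
    exact le_trans (measure_mono hsub) (by simp)
  · have ud : UniqueDiffOn ℝ (Icc x₀ x₁) := uniqueDiffOn_Icc hlt
    have hcont : ContinuousOn (iteratedDerivWithin k f (Icc x₀ x₁)) (Icc x₀ x₁) :=
      hf.continuousOn_iteratedDerivWithin le_rfl ud
    rcases sign_const hx hη hcont habs with hp | hn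
    · exact hpos x₀ x₁ f η hlt hη hf hp l hl
    · have hneg : ∀ x ∈ Icc x₀ x₁, η < iteratedDerivWithin k (-f) (Icc x₀ x₁) x := by
        intro x hxI
        rw [iteratedDerivWithin_neg f]
        exact hn x hxI
      have := hpos x₀ x₁ (-f) η hlt hη hf.neg hneg l hl
      simpa using this

/-- Sublevel-set estimate.  For every `k ≥ 1` there is a constant
`C > 0` depending only on `k` such that for every interval `[x₀,x₁]`, every
`η > 0` and every `C^k` function `f` on `[x₀,x₁]` with `|f^{(k)}| > η` there,
the measure of `{x ∈ [x₀,x₁] : |f x| ≤ λ}` is at most `C (λ/η)^{1/k}` for all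
`λ > 0`. -/
theorem stmt_8 (k : ℕ) (hk : 1 ≤ k) :
    ∃ C : ℝ, 0 < C ∧
      ∀ (x₀ x₁ : ℝ) (f : ℝ → ℝ) (η : ℝ), x₀ ≤ x₁ → 0 < η →
        ContDiffOn ℝ k f (Icc x₀ x₁) →
        (∀ x ∈ Icc x₀ x₁, η < |iteratedDerivWithin k f (Icc x₀ x₁) x|) →
        ∀ l : ℝ, 0 < l →
          volume {x ∈ Icc x₀ x₁ | |f x| ≤ l} ≤
            ENNReal.ofReal (C * (l / η) ^ (1 / (k:ℝ))) := by
  induction k, hk using Nat.le_induction with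
  | base =>
    refine ⟨4, by norm_num, ?_⟩
    apply pos_to_abs 1 4
    intro x₀ x₁ f η hx hη hf hpos l hl
    have ud : UniqueDiffOn ℝ (Icc x₀ x₁) := uniqueDiffOn_Icc hx
    have hder : ∀ x ∈ interior (Icc x₀ x₁), η < deriv f x := by
      intro x hxint
      rw [interior_Icc] at hxint
      have hxI : x ∈ Icc x₀ x₁ := Ioo_subset_Icc_self hxint
      have h1 : iteratedDerivWithin 1 f (Icc x₀ x₁) x = derivWithin f (Icc x₀ x₁) x :=
        congrFun iteratedDerivWithin_one x
      have h2 : derivWithin f (Icc x₀ x₁) x = deriv f x :=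
        derivWithin_of_mem_nhds (Icc_mem_nhds hxint.1 hxint.2)
      have := hpos x hxI
      rwa [h1, h2] at this
    have hdiff : DifferentiableOn ℝ f (interior (Icc x₀ x₁)) :=
      (hf.differentiableOn (by norm_num)).mono interior_subset
    have hb := sublevel_diam (δ := l) hη hf.continuousOn hdiff hder
    have hexp : (l / η) ^ (1 / ((1:ℕ):ℝ)) = l / η := by
      norm_num
    rw [hexp]
    exact hb
  | succ k hk IH =>
    obtain ⟨C, hC, hIH⟩ := IH
    refine ⟨4 * C + 4, by positivity, ?_⟩
    apply pos_to_abs (k + 1) (4 * C + 4)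
    intro x₀ x₁ f η hx hη hf hpos l hl
    have hxle : x₀ ≤ x₁ := hx.le
    have ud : UniqueDiffOn ℝ (Icc x₀ x₁) := uniqueDiffOn_Icc hx
    have hkR : (0:ℝ) < k := by exact_mod_cast hk
    set t : ℝ := l / η with ht_def
    have ht : 0 < t := div_pos hl hη
    set e : ℝ := 1 / ((k:ℝ) + 1) with he_def
    have he : 0 < e := by positivity
    have hte : 0 < t ^ e := Real.rpow_pos_of_pos ht e
    set δ : ℝ := η * t ^ e with hδ_def
    have hδ : 0 < δ := mul_pos hη hte
    set g := iteratedDerivWithin k f (Icc x₀ x₁) with hg_def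
    have hgc : ContinuousOn g (Icc x₀ x₁) :=
      hf.continuousOn_iteratedDerivWithin (by exact_mod_cast Nat.le_succ k) ud
    have hgd : DifferentiableOn ℝ g (Icc x₀ x₁) :=
      hf.differentiableOn_iteratedDerivWithin (by exact_mod_cast Nat.lt_succ_self k) ud
    have hderiv : ∀ x ∈ interior (Icc x₀ x₁), η < deriv g x ∧ DifferentiableAt ℝ g x := by
      intro x hxint
      rw [interior_Icc] at hxint
      have hxI : x ∈ Icc x₀ x₁ := Ioo_subset_Icc_self hxint
      have hnb : Icc x₀ x₁ ∈ nhds x := Icc_mem_nhds hxint.1 hxint.2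
      have hda : DifferentiableAt ℝ g x := (hgd x hxI).differentiableAt hnb
      have h2 : derivWithin g (Icc x₀ x₁) x = deriv g x := derivWithin_of_mem_nhds hnb
      have h1 : iteratedDerivWithin (k + 1) f (Icc x₀ x₁) x = derivWithin g (Icc x₀ x₁) x :=
        congrFun iteratedDerivWithin_succ x
      refine ⟨?_, hda⟩
      rw [← h2, ← h1]
      exact hpos x hxI
    have hmono : StrictMonoOn g (Icc x₀ x₁) :=
      strictMonoOn_of_deriv_pos (convex_Icc _ _) hgc
        (fun x hx' => hη.trans (hderiv x hx').1)
    -- bound on the middle piece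
    have hB : volume {x ∈ Icc x₀ x₁ | |g x| ≤ δ} ≤ ENNReal.ofReal (4 * (δ / η)) :=
      sublevel_diam hη hgc (fun x hx' => ((hderiv x hx').2).differentiableWithinAt)
        (fun x hx' => (hderiv x hx').1)
    -- bound on the left piece
    have hLbound : volume {x ∈ Icc x₀ x₁ | |f x| ≤ l ∧ g x ≤ -δ} ≤
        ENNReal.ofReal (C * (l / (δ / 2)) ^ (1 / (k:ℝ))) := by
      set L := {x ∈ Icc x₀ x₁ | g x ≤ -δ} with hL_def
      have hLclosed : IsClosed L := by
        have : L = Icc x₀ x₁ ∩ g ⁻¹' (Iic (-δ)) := rfl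
        rw [this]
        exact hgc.preimage_isClosed_of_isClosed isClosed_Icc isClosed_Iic
      rcases L.eq_empty_or_nonempty with hLe | hLne
      · have hempty : {x ∈ Icc x₀ x₁ | |f x| ≤ l ∧ g x ≤ -δ} = ∅ := by
          rw [eq_empty_iff_forall_notMem]
          rintro y ⟨hyI, -, hgy⟩
          exact (eq_empty_iff_forall_notMem.mp hLe y) ⟨hyI, hgy⟩
        rw [hempty]
        simp
      · set c₀ := sSup L with hc₀_def
        have hbdd : BddAbove L := ⟨x₁, fun y hy => hy.1.2⟩
        have hc₀L : c₀ ∈ L := hLclosed.csSup_mem hLne hbdd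
        have hc₀I : c₀ ∈ Icc x₀ x₁ := hc₀L.1
        rcases eq_or_lt_of_le hc₀I.1 with heq | hlt
        · -- degenerate subinterval
          have hsub : {x ∈ Icc x₀ x₁ | |f x| ≤ l ∧ g x ≤ -δ} ⊆ {x₀} := by
            rintro y ⟨hyI, -, hgy⟩
            have hyc : y ≤ c₀ := le_csSup hbdd ⟨hyI, hgy⟩
            have : y = x₀ := le_antisymm (heq ▸ hyc) hyI.1
            simp [this]
          exact le_trans (measure_mono hsub) (by simp)
        · have hJsub : Icc x₀ c₀ ⊆ Icc x₀ x₁ := Icc_subset_Icc le_rfl hc₀I.2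
          have udJ : UniqueDiffOn ℝ (Icc x₀ c₀) := uniqueDiffOn_Icc hlt
          have htrans : ∀ y ∈ Icc x₀ c₀,
              iteratedDerivWithin k f (Icc x₀ c₀) y = g y :=
            iter_subset hJsub udJ ud hf k (Nat.lt_succ_self k)
          have hgle : ∀ y ∈ Icc x₀ c₀, g y ≤ -δ := by
            intro y hy
            rcases eq_or_lt_of_le hy.2 with h | h
            · rw [h]; exact hc₀L.2
            · exact le_trans (hmono (hJsub hy) hc₀I h).le hc₀L.2
          have habs : ∀ y ∈ Icc x₀ c₀, δ / 2 < |iteratedDerivWithin k f (Icc x₀ c₀) y| := by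
            intro y hy
            rw [htrans y hy]
            have h1 : δ ≤ -g y := by linarith [hgle y hy]
            have h2 : -g y ≤ |g y| := neg_le_abs _
            linarith
          have happ := hIH x₀ c₀ f (δ / 2) hc₀I.1 (by positivity)
            ((hf.mono hJsub).of_le (by exact_mod_cast Nat.le_succ k)) habs l hl
          refine le_trans (measure_mono ?_) happ
          rintro y ⟨hyI, hfy, hgy⟩
          exact ⟨⟨hyI.1, le_csSup hbdd ⟨hyI, hgy⟩⟩, hfy⟩
    -- bound on the right piece
    have hRbound : volume {x ∈ Icc x₀ x₁ | |f x| ≤ l ∧ δ ≤ g x} ≤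
        ENNReal.ofReal (C * (l / (δ / 2)) ^ (1 / (k:ℝ))) := by
      set R := {x ∈ Icc x₀ x₁ | δ ≤ g x} with hR_def
      have hRclosed : IsClosed R := by
        have : R = Icc x₀ x₁ ∩ g ⁻¹' (Ici δ) := rfl
        rw [this]
        exact hgc.preimage_isClosed_of_isClosed isClosed_Icc isClosed_Ici
      rcases R.eq_empty_or_nonempty with hRe | hRne
      · have hempty : {x ∈ Icc x₀ x₁ | |f x| ≤ l ∧ δ ≤ g x} = ∅ := by
          rw [eq_empty_iff_forall_notMem]
          rintro y ⟨hyI, -, hgy⟩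
          exact (eq_empty_iff_forall_notMem.mp hRe y) ⟨hyI, hgy⟩
        rw [hempty]
        simp
      · set c₁ := sInf R with hc₁_def
        have hbdd : BddBelow R := ⟨x₀, fun y hy => hy.1.1⟩
        have hc₁R : c₁ ∈ R := hRclosed.csInf_mem hRne hbdd
        have hc₁I : c₁ ∈ Icc x₀ x₁ := hc₁R.1
        rcases eq_or_lt_of_le hc₁I.2 with heq | hlt
        · have hsub : {x ∈ Icc x₀ x₁ | |f x| ≤ l ∧ δ ≤ g x} ⊆ {x₁} := by
            rintro y ⟨hyI, -, hgy⟩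
            have hyc : c₁ ≤ y := csInf_le hbdd ⟨hyI, hgy⟩
            have : y = x₁ := le_antisymm hyI.2 (heq ▸ hyc)
            simp [this]
          exact le_trans (measure_mono hsub) (by simp)
        · have hJsub : Icc c₁ x₁ ⊆ Icc x₀ x₁ := Icc_subset_Icc hc₁I.1 le_rfl
          have udJ : UniqueDiffOn ℝ (Icc c₁ x₁) := uniqueDiffOn_Icc hlt
          have htrans : ∀ y ∈ Icc c₁ x₁,
              iteratedDerivWithin k f (Icc c₁ x₁) y = g y :=
            iter_subset hJsub udJ ud hf k (Nat.lt_succ_self k)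
          have hgge : ∀ y ∈ Icc c₁ x₁, δ ≤ g y := by
            intro y hy
            rcases eq_or_lt_of_le hy.1 with h | h
            · rw [← h]; exact hc₁R.2
            · exact le_trans hc₁R.2 (hmono hc₁I (hJsub hy) h).le
          have habs : ∀ y ∈ Icc c₁ x₁, δ / 2 < |iteratedDerivWithin k f (Icc c₁ x₁) y| := by
            intro y hy
            rw [htrans y hy]
            have h1 : δ ≤ g y := hgge y hy
            have h2 : g y ≤ |g y| := le_abs_self _
            linarith
          have happ := hIH c₁ x₁ f (δ / 2) hc₁I.2 (by positivity)
            ((hf.mono hJsub).of_le (by exact_mod_cast Nat.le_succ k)) habs l hl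
          refine le_trans (measure_mono ?_) happ
          rintro y ⟨hyI, hfy, hgy⟩
          exact ⟨⟨csInf_le hbdd ⟨hyI, hgy⟩, hyI.2⟩, hfy⟩
    -- covering
    have hcover : {x ∈ Icc x₀ x₁ | |f x| ≤ l} ⊆
        {x ∈ Icc x₀ x₁ | |f x| ≤ l ∧ g x ≤ -δ} ∪
          ({x ∈ Icc x₀ x₁ | |g x| ≤ δ} ∪ {x ∈ Icc x₀ x₁ | |f x| ≤ l ∧ δ ≤ g x}) := by
      rintro y ⟨hyI, hfy⟩
      rcases le_or_gt (g y) (-δ) with h | h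
      · exact Or.inl ⟨hyI, hfy, h⟩
      · rcases le_or_gt δ (g y) with h' | h'
        · exact Or.inr (Or.inr ⟨hyI, hfy, h'⟩)
        · exact Or.inr (Or.inl ⟨hyI, abs_le.2 ⟨h.le, h'.le⟩⟩)
    -- real arithmetic
    have htne : (t:ℝ) ^ e ≠ 0 := hte.ne'
    have hδη : δ / η = t ^ e := by
      rw [hδ_def]
      field_simp
    have hlδ : l / (δ / 2) = 2 * (t ^ ((1:ℝ) - e)) := by
      have h1 : t ^ ((1:ℝ) - e) = t / t ^ e := by
        rw [Real.rpow_sub ht, Real.rpow_one]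
      rw [h1, hδ_def, ht_def]
      field_simp
    have hexp : ((1:ℝ) - e) * (1 / (k:ℝ)) = e := by
      rw [he_def]
      field_simp
      ring
    have hmain : (l / (δ / 2)) ^ (1 / (k:ℝ)) = 2 ^ (1 / (k:ℝ)) * t ^ e := by
      rw [hlδ, Real.mul_rpow (by norm_num) (Real.rpow_pos_of_pos ht _).le,
        ← Real.rpow_mul ht.le, hexp]
    have h2k : (2:ℝ) ^ (1 / (k:ℝ)) ≤ 2 := by
      calc (2:ℝ) ^ (1 / (k:ℝ)) ≤ 2 ^ (1:ℝ) :=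
            Real.rpow_le_rpow_of_exponent_le one_le_two
              ((div_le_one hkR).2 (by exact_mod_cast hk))
        _ = 2 := Real.rpow_one 2
    have h2kpos : (0:ℝ) < 2 ^ (1 / (k:ℝ)) := Real.rpow_pos_of_pos (by norm_num) _
    have harith : C * (l / (δ / 2)) ^ (1 / (k:ℝ)) +
        (4 * (δ / η) + C * (l / (δ / 2)) ^ (1 / (k:ℝ))) ≤
        (4 * C + 4) * (l / η) ^ (1 / ((k:ℝ) + 1)) := by
      rw [hmain, hδη, ← ht_def, ← he_def]
      nlinarith [hte, hC, h2k, h2kpos,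
        mul_nonneg (mul_nonneg hC.le hte.le) (sub_nonneg.2 h2k)]
    have hgoalexp : (1 / (((k:ℕ) + 1 : ℕ) : ℝ)) = (1 / ((k:ℝ) + 1)) := by
      push_cast
      ring
    calc volume {x ∈ Icc x₀ x₁ | |f x| ≤ l}
        ≤ volume ({x ∈ Icc x₀ x₁ | |f x| ≤ l ∧ g x ≤ -δ} ∪
            ({x ∈ Icc x₀ x₁ | |g x| ≤ δ} ∪ {x ∈ Icc x₀ x₁ | |f x| ≤ l ∧ δ ≤ g x})) :=
          measure_mono hcover
      _ ≤ volume {x ∈ Icc x₀ x₁ | |f x| ≤ l ∧ g x ≤ -δ} +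
            (volume {x ∈ Icc x₀ x₁ | |g x| ≤ δ} +
              volume {x ∈ Icc x₀ x₁ | |f x| ≤ l ∧ δ ≤ g x}) :=
          le_trans (measure_union_le _ _) (add_le_add le_rfl (measure_union_le _ _))
      _ ≤ ENNReal.ofReal (C * (l / (δ / 2)) ^ (1 / (k:ℝ))) +
            (ENNReal.ofReal (4 * (δ / η)) +
              ENNReal.ofReal (C * (l / (δ / 2)) ^ (1 / (k:ℝ)))) :=
          add_le_add hLbound (add_le_add hB hRbound)
      _ = ENNReal.ofReal (C * (l / (δ / 2)) ^ (1 / (k:ℝ)) +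
            (4 * (δ / η) + C * (l / (δ / 2)) ^ (1 / (k:ℝ)))) := by
          rw [← ENNReal.ofReal_add (by positivity) (by positivity),
            ← ENNReal.ofReal_add (by positivity) (by positivity)]
      _ ≤ ENNReal.ofReal ((4 * C + 4) * (l / η) ^ (1 / ((k:ℝ) + 1))) :=
          ENNReal.ofReal_le_ofReal harith
      _ = ENNReal.ofReal ((4 * C + 4) * (l / η) ^ (1 / (((k:ℕ) + 1 : ℕ) : ℝ))) := by
          rw [hgoalexp]
end

section
/- Let a ≥ 1, m ≥ 1 be integers and let φ_1, …, φ_a be complex-valued continuous functions near 0 ∈ ℝ with φ_j(y) = O(y^N) for every N, and suppose max_j |φ_j(y)| ≤ (1/2) y^m for y ∈ [0, r]. Let ṽ be continuous near the origin in ℝ² with ṽ(0,0) > 0, and set f̃(x,y) = ṽ(x,y) ∏_{j=1}^a (1 − φ_j(y)/x). Then, after possibly shrinking r and the neighborhood, f̃(x,y) ≥ ṽ(0,0)/2^{a+1} > 0 for all (x,y) with x > y^m and 0 ≤ y ≤ r. -/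
open Set Asymptotics

/-- Lemma 5.2(i): with `f̃(x,y) = ṽ(x,y) ∏_{j=1}^a (1 − φ_j(y)/x)`,
where `ṽ` is continuous with `ṽ(0,0) > 0` and each `φ_j` is continuous,
`φ_j(y) = O(y^N)` for every `N`, and `|φ_j(y)| ≤ (1/2) y^m` on `[0,r]`, after
shrinking `r` and the neighborhood one has the uniform lower bound
`f̃ ≥ ṽ(0,0)/2^{a+1}` on the region `{x > y^m, 0 ≤ y ≤ r}`. -/
theorem stmt_18 (a m : ℕ) (ha : 1 ≤ a) (hm : 1 ≤ m) (r : ℝ) (hr : 0 < r)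
    (φ : ℕ → ℝ → ℝ) (hφc : ∀ j, Continuous (φ j))
    (hφO : ∀ j, ∀ N : ℕ, (fun y => φ j y) =O[nhds (0:ℝ)] fun y => y ^ N)
    (hφb : ∀ j < a, ∀ y ∈ Icc (0:ℝ) r, |φ j y| ≤ (1/2) * y ^ m)
    (vt : ℝ × ℝ → ℝ) (hvt : Continuous vt) (hv0 : 0 < vt (0, 0)) :
    ∃ r' : ℝ, 0 < r' ∧ r' ≤ r ∧
      ∀ p : ℝ × ℝ, p.2 ^ m < p.1 → p.1 ≤ r' → 0 ≤ p.2 → p.2 ≤ r' →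
        vt (0, 0) / 2 ^ (a + 1) ≤
          vt p * ∏ j ∈ Finset.range a, (1 - φ j p.2 / p.1) := by
  -- continuity: find δ > 0 such that vt p > vt(0,0)/2 when dist p (0,0) < δ
  have hcont : ContinuousAt vt (0, 0) := hvt.continuousAt
  have h2 : vt (0, 0) / 2 < vt (0, 0) := by linarith
  obtain ⟨δ, hδ, hδv⟩ := Metric.continuousAt_iff.mp hcont (vt (0, 0) / 2) (by linarith)
  refine ⟨min r (δ / 2), lt_min hr (by linarith), min_le_left _ _, ?_⟩
  intro p hx hxr hy hyr
  have hyr' : p.2 ≤ r := hyr.trans (min_le_left _ _)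
  have hx0 : 0 < p.1 := lt_of_le_of_lt (pow_nonneg hy m) hx
  -- vt p ≥ vt(0,0)/2
  have hdist : dist p (0, 0) < δ := by
    have h1 : |p.1| < δ := by
      rw [abs_of_pos hx0]
      calc p.1 ≤ min r (δ / 2) := hxr
        _ ≤ δ / 2 := min_le_right _ _
        _ < δ := by linarith
    have h2 : |p.2| < δ := by
      rw [abs_of_nonneg hy]
      calc p.2 ≤ min r (δ / 2) := hyr
        _ ≤ δ / 2 := min_le_right _ _
        _ < δ := by linarith
    calc dist p (0, 0) = max (dist p.1 0) (dist p.2 0) := Prod.dist_eq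
      _ < δ := max_lt (by simpa using h1) (by simpa using h2)
  have hvp : vt (0, 0) / 2 ≤ vt p := by
    have := hδv hdist
    rw [Real.dist_eq] at this
    have := abs_lt.mp this
    linarith [this.1]
  -- each factor ≥ 1/2
  have hfac : ∀ j ∈ Finset.range a, (1 : ℝ) / 2 ≤ 1 - φ j p.2 / p.1 := by
    intro j hj
    have hb := hφb j (Finset.mem_range.mp hj) p.2 ⟨hy, hyr'⟩
    have h1 : |φ j p.2 / p.1| ≤ 1 / 2 := by
      rw [abs_div, abs_of_pos hx0, div_le_iff₀ hx0]
      calc |φ j p.2| ≤ (1/2) * p.2 ^ m := hb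
        _ ≤ (1/2) * p.1 := by nlinarith
        _ = 1 / 2 * p.1 := by ring
    linarith [(abs_le.mp h1).2]
  -- product ≥ (1/2)^a
  have hprod : ((1 : ℝ) / 2) ^ a ≤ ∏ j ∈ Finset.range a, (1 - φ j p.2 / p.1) := by
    calc ((1 : ℝ) / 2) ^ a = ∏ _j ∈ Finset.range a, (1 : ℝ) / 2 := by
          simp
      _ ≤ _ := Finset.prod_le_prod (fun j _ => by norm_num) hfac
  have hprod0 : (0 : ℝ) ≤ ∏ j ∈ Finset.range a, (1 - φ j p.2 / p.1) :=
    le_trans (by positivity) hprod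
  calc vt (0, 0) / 2 ^ (a + 1) = (vt (0, 0) / 2) * ((1 : ℝ) / 2) ^ a := by
        rw [pow_succ, one_div_pow, div_mul_div_comm, mul_one, mul_comm (2:ℝ)]
    _ ≤ vt p * ∏ j ∈ Finset.range a, (1 - φ j p.2 / p.1) :=
        mul_le_mul hvp hprod (by positivity) (le_trans (by linarith) hvp)
end
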